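/- Let q be an odd prime power, d a non-square in F_q*, and α in F_{q^2} with α² = d. Let γ be an element of Q = {γ in F_{q^2} : γ^{q+1} = 1} with γ ≠ 1 and γ ≠ −1, and write γ = x + y*α with x, y in F_q (so y ≠ 0). Then φ(γ²) = (x/(y*d))·α. -/

import Mathlib

/-- if γ = x + y·α lies in Q = {γ : γ^{q+1} = 1} with γ ≠ 1 and
γ ≠ −1, then φ(γ²) = (x/(y·d))·α. -/
theorem stmt_13 (q : ℕ) (hq : Odd q) (hq' : IsPrimePow q)
    (F : Type*) [Field F] (hF : Nat.card F = q ^ 2)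
    (K : Subfield F) (hK : Nat.card K = q)
    (d : F) (hdK : d ∈ K) (hd0 : d ≠ 0) (hdns : ¬ ∃ c ∈ K, c * c = d)
    (α : F) (hα : α ^ 2 = d)
    (φ : F → F) (hφ : ∀ γ : F, γ ≠ 1 → φ γ = (γ + 1) / (γ - 1)) (hφ1 : φ 1 = 1)
    (γ x y : F) (hγQ : γ ^ (q + 1) = 1) (hγ1 : γ ≠ 1) (hγn1 : γ ≠ -1)
    (hx : x ∈ K) (hy : y ∈ K) (hγ : γ = x + y * α) :
    φ (γ ^ 2) = (x / (y * d)) * α := by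
  classical
  have hq2 : 2 ≤ q := hq'.two_le
  have hFfin : Finite F := Nat.finite_of_card_ne_zero (by rw [hF]; positivity)
  cases nonempty_fintype F
  haveI hKfin : Fintype K := Fintype.ofFinite K
  have hKcard : Fintype.card K = q := by rw [← Nat.card_eq_fintype_card, hK]
  have hfix : ∀ c ∈ K, c ^ q = c := by
    intro c hc
    have h := FiniteField.pow_card (⟨c, hc⟩ : K)
    rw [hKcard] at h
    have h2 := congrArg (Subtype.val) h
    push_cast at h2
    exact h2
  -- characteristic
  obtain ⟨p, k, hp, hk, hpk⟩ := hq'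
  have hp' : p.Prime := hp.nat_prime
  haveI : Fact p.Prime := ⟨hp'⟩
  obtain ⟨n, hrp, hcard⟩ := FiniteField.card F (ringChar F)
  have hchar : ringChar F = p := by
    have h1 : ringChar F ^ (n : ℕ) = p ^ (2 * k) := by
      rw [← hcard, ← Nat.card_eq_fintype_card, hF, ← hpk]; ring
    have hdvd : ringChar F ∣ p ^ (2 * k) := by
      rw [← h1]; exact dvd_pow_self _ (by exact_mod_cast n.pos.ne')
    exact (Nat.prime_dvd_prime_iff_eq hrp hp').mp (hrp.dvd_of_dvd_pow hdvd)
  haveI hcp : CharP F p := hchar ▸ ringChar.charP F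
  have hp2 : p ≠ 2 := by
    rintro rfl
    rw [← hpk] at hq
    exact (Nat.not_odd_iff_even.mpr (Nat.even_pow.mpr ⟨even_two, hk.ne'⟩)) hq
  have two_ne : (2 : F) ≠ 0 := Ring.two_ne_zero (by rw [hchar]; exact hp2)
  have hfrob : ∀ a b : F, (a + b) ^ q = a ^ q + b ^ q := by
    intro a b
    rw [← hpk]
    exact add_pow_char_pow ..
  -- α^q = -α
  have hαor : α ^ q = α ∨ α ^ q = -α := by
    have h2 : (α ^ q - α) * (α ^ q + α) = 0 := by
      have hdq : d ^ q = d := hfix d hdK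
      have h3 : (α ^ q) ^ 2 = α ^ 2 := by
        calc (α ^ q) ^ 2 = (α ^ 2) ^ q := by rw [← pow_mul, ← pow_mul, mul_comm]
        _ = d ^ q := by rw [hα]
        _ = d := hdq
        _ = α ^ 2 := hα.symm
      linear_combination h3
    rcases mul_eq_zero.mp h2 with h | h
    · exact Or.inl (by linear_combination h)
    · exact Or.inr (by linear_combination h)
  have hαq : α ^ q = -α := by
    rcases hαor with hcase | h
    · exfalso
      apply hdns
      refine ⟨α, ?_, by rw [← sq]; exact hα⟩
      set P : Polynomial F := Polynomial.X ^ q - Polynomial.X with hP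
      have hPdeg : P.natDegree = q := by
        rw [hP]
        compute_degree!
        · simp only [if_neg (by omega : ¬ 1 = q)]
          norm_num
        · omega
      have hPne : P ≠ 0 := by
        intro h; rw [h] at hPdeg; simp at hPdeg; omega
      have hroot : ∀ c : F, c ^ q = c → c ∈ P.roots := by
        intro c hc
        rw [Polynomial.mem_roots hPne]
        simp [hP, Polynomial.IsRoot, sub_eq_zero, hc]
      set T := P.roots.toFinset with hT
      set KF : Finset F := Finset.image (fun c : K => (c : F)) Finset.univ with hKF
      have hKFcard : KF.card = q := by
        rw [hKF, Finset.card_image_of_injective _ Subtype.val_injective,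
          Finset.card_univ, hKcard]
      have hsub : KF ⊆ T := by
        intro c hc
        rw [hKF, Finset.mem_image] at hc
        obtain ⟨a, -, rfl⟩ := hc
        exact Multiset.mem_toFinset.mpr (hroot _ (hfix _ a.2))
      have hTcard : T.card ≤ q :=
        le_trans (P.roots.toFinset_card_le) (le_trans (Polynomial.card_roots' P) hPdeg.le)
      have heq : KF = T := Finset.eq_of_subset_of_card_le hsub (by omega)
      have hmem : α ∈ T := Multiset.mem_toFinset.mpr (hroot α hcase)
      rw [← heq, hKF, Finset.mem_image] at hmem
      obtain ⟨a, -, rfl⟩ := hmem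
      exact a.2
    · exact h
  -- γ^q = x - yα
  have hγq : γ ^ q = x - y * α := by
    rw [hγ, hfrob, hfix x hx, mul_pow, hfix y hy, hαq]
    ring
  have hnorm : x ^ 2 - y ^ 2 * d = 1 := by
    have h := hγQ
    rw [pow_succ, hγq, hγ] at h
    linear_combination h + y ^ 2 * hα
  have hy0 : y ≠ 0 := by
    rintro rfl
    rw [zero_mul, add_zero] at hγ
    have h2 : γ ^ 2 = 1 := by
      have h := hγQ
      rw [pow_succ, hγq] at h
      rw [hγ]
      rw [hγ] at h
      linear_combination h
    have h3 : (γ - 1) * (γ + 1) = 0 := by linear_combination h2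
    rcases mul_eq_zero.mp h3 with h | h
    · exact hγ1 (by linear_combination h)
    · exact hγn1 (by linear_combination h)
  have hα0 : α ≠ 0 := by
    intro h; apply hd0; rw [← hα, h]; ring
  have hγ0 : γ ≠ 0 := by
    intro h
    rw [h, zero_pow (Nat.succ_ne_zero q)] at hγQ
    exact one_ne_zero hγQ.symm
  have hsq1 : γ ^ 2 - 1 = 2 * y * α * γ := by
    rw [hγ]; linear_combination hnorm - y ^ 2 * hα
  have hsq2 : γ ^ 2 + 1 = 2 * x * γ := by
    rw [hγ]; linear_combination -hnorm + y ^ 2 * hα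
  have hne1 : γ ^ 2 ≠ 1 := by
    intro h
    have h0 : 2 * y * α * γ = 0 := by rw [← hsq1, h]; ring
    exact (mul_ne_zero (mul_ne_zero (mul_ne_zero two_ne hy0) hα0) hγ0) h0
  rw [hφ _ hne1, hsq2, hsq1]
  rw [div_eq_iff (mul_ne_zero (mul_ne_zero (mul_ne_zero two_ne hy0) hα0) hγ0)]
  have hyd : y * d ≠ 0 := mul_ne_zero hy0 hd0
  field_simp
  linear_combination (-x) * hα
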